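/- Lower bound on the shift. Let f, g ∈ Ψ be (0,1)-interpolating, let ω be an averaging kernel with ‖ω‖∞ < ∞, let α ∈ ℝ, and let (hf, hg) ∈ 𝒳² be such that (f, g) is a consistent travelling-wave solution with shift α. Then |A(hf, hg)| ≤ |α|·‖ω‖∞. -/

import Mathlib

open MeasureTheory Filter Set

noncomputable section

/-- Convolution `(f ⊗ ω)(x) = ∫ y, f y · ω (x − y)`. -/
def conv (f ω : ℝ → ℝ) (x : ℝ) : ℝ := ∫ y : ℝ, f y * ω (x - y)

/-- `ω` is an averaging kernel: even, nonnegative, of bounded variation, integrating to 1. -/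
def IsAveragingKernel (ω : ℝ → ℝ) : Prop :=
  (∀ x, ω (-x) = ω x) ∧ (∀ x, 0 ≤ ω x) ∧ BoundedVariationOn ω Set.univ ∧
    MeasureTheory.Integrable ω ∧ (∫ x : ℝ, ω x) = 1

/-- The essential supremum `‖ω‖∞` of a kernel, as a real number. -/
def kerSup (ω : ℝ → ℝ) : ℝ := (eLpNorm ω ⊤ MeasureTheory.volume).toReal

/-- `ω` is regular: for some `W ∈ (0,∞]`, it vanishes outside `[−W, W]` and is
positive on `(−W, W)` (the case `W = ∞` being that `ω` is everywhere positive). -/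
def IsRegularKernel (ω : ℝ → ℝ) : Prop :=
  (∀ x, 0 < ω x) ∨
    ∃ W : ℝ, 0 < W ∧ (∀ x, W < |x| → ω x = 0) ∧ (∀ x, |x| < W → 0 < ω x)

/-- Membership in `𝒳`: nondecreasing self-maps of `[0,1]`. -/
def MemX (h : ℝ → ℝ) : Prop :=
  MonotoneOn h (Icc 0 1) ∧ MapsTo h (Icc 0 1) (Icc 0 1)

/-- Left limit `h(u−)` of `h ∈ 𝒳` at `u ∈ [0,1]`, with the convention `h(0−) = 0`. -/
def lm (h : ℝ → ℝ) (u : ℝ) : ℝ := if u ≤ 0 then 0 else sSup (h '' Ico 0 u)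

/-- Right limit `h(u+)` of `h ∈ 𝒳` at `u ∈ [0,1]`, with the convention `h(1+) = 1`. -/
def rm (h : ℝ → ℝ) (u : ℝ) : ℝ := if 1 ≤ u then 1 else sInf (h '' Ioc u 1)

/-- A canonical generalized inverse of `h ∈ 𝒳` (any valid inverse has the same integrals,
so the potential below is unambiguous). -/
def Xinv (h : ℝ → ℝ) (v : ℝ) : ℝ := sInf ({1} ∪ {u ∈ Icc (0:ℝ) 1 | v ≤ h u})

/-- The potential `Φ(hf, hg; u, v) = ∫₀ᵘ hg⁻¹ + ∫₀ᵛ hf⁻¹ − u·v`. -/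
def Pot (hf hg : ℝ → ℝ) (u v : ℝ) : ℝ :=
  (∫ x in (0:ℝ)..u, Xinv hg x) + (∫ x in (0:ℝ)..v, Xinv hf x) - u * v

/-- `A(hf, hg) = Φ(hf, hg; 1, 1)`. -/
def Agap (hf hg : ℝ → ℝ) : ℝ := Pot hf hg 1 1

/-- `(u,v)` is a crossing point of `(hf, hg)`:
`u ∈ [hg(v−), hg(v+)]` and `v ∈ [hf(u−), hf(u+)]`. -/
def IsCrossing (hf hg : ℝ → ℝ) (u v : ℝ) : Prop :=
  u ∈ Icc (0:ℝ) 1 ∧ v ∈ Icc (0:ℝ) 1 ∧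
    u ∈ Icc (lm hg v) (rm hg v) ∧ v ∈ Icc (lm hf u) (rm hf u)

/-- The strictly positive gap condition: there is a nontrivial crossing point, and every
nontrivial crossing point satisfies `Φ(hf, hg; u, v) > max {0, A(hf, hg)}`. -/
def StrictPosGap (hf hg : ℝ → ℝ) : Prop :=
  (∃ u v, IsCrossing hf hg u v ∧ ¬(u = 0 ∧ v = 0) ∧ ¬(u = 1 ∧ v = 1)) ∧
    ∀ u v, IsCrossing hf hg u v → ¬(u = 0 ∧ v = 0) → ¬(u = 1 ∧ v = 1) →
      max 0 (Agap hf hg) < Pot hf hg u v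

/-- Membership in `Ψ`: nondecreasing functions `ℝ → [0,1]`. -/
def MemPsi (f : ℝ → ℝ) : Prop := Monotone f ∧ ∀ x, f x ∈ Icc (0:ℝ) 1

/-- `f` is `(a,b)`-interpolating: limits `a` at `−∞` and `b` at `+∞`. -/
def Interpolates (f : ℝ → ℝ) (a b : ℝ) : Prop :=
  Filter.Tendsto f Filter.atBot (nhds a) ∧ Filter.Tendsto f Filter.atTop (nhds b)

/-- `(f, g)` is a consistent travelling-wave solution with shift `α` for `(hf, hg)`
and kernel `ω`. -/
def ConsistentWave (hf hg f g ω : ℝ → ℝ) (α : ℝ) : Prop :=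
  (∀ x, f x ∈ Icc (lm hf (conv g ω (x + α))) (rm hf (conv g ω (x + α)))) ∧
    (∀ x, g x ∈ Icc (lm hg (conv f ω x)) (rm hg (conv f ω x)))



open scoped ENNReal

section Aux
variable {ω f g h u G : ℝ → ℝ}

def clampX (h : ℝ → ℝ) (t : ℝ) : ℝ := h (max 0 (min 1 t))

lemma ker_meas (hω : IsAveragingKernel ω) : Measurable ω := by
  obtain ⟨p, q, hp, hq, rfl⟩ :=
    hω.2.2.1.locallyBoundedVariationOn.exists_monotoneOn_sub_monotoneOn
  exact ((monotoneOn_univ.1 hp).measurable).sub ((monotoneOn_univ.1 hq).measurable)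

lemma ker_int (hω : IsAveragingKernel ω) : Integrable ω := hω.2.2.2.1

/-- Integrability of the convolution integrand. -/
lemma conv_integrand_int (hω : IsAveragingKernel ω) (hGm : Measurable g)
    (hG1 : ∀ x, g x ∈ Icc (0:ℝ) 1) (c : ℝ) :
    Integrable (fun x => g x * ω (c - x)) := by
  refine Integrable.mono' ((ker_int hω).comp_sub_left c)
    (hGm.mul ((ker_meas hω).comp (measurable_const.sub measurable_id))).aestronglyMeasurable
    (ae_of_all _ fun x => ?_)
  have h1 := hG1 x
  have h2 := hω.2.1 (c - x)
  rw [Real.norm_eq_abs, abs_mul, abs_of_nonneg h1.1, abs_of_nonneg h2]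
  nlinarith [h1.2]

lemma conv_integrand_int' (hω : IsAveragingKernel ω) (hGm : Measurable g)
    (hG1 : ∀ x, g x ∈ Icc (0:ℝ) 1) (c : ℝ) :
    Integrable (fun t => g (c - t) * ω t) := by
  refine Integrable.mono' (ker_int hω)
    (((hGm.comp (measurable_const.sub measurable_id)).mul (ker_meas hω))).aestronglyMeasurable
    (ae_of_all _ fun x => ?_)
  have h1 := hG1 (c - x)
  have h2 := hω.2.1 x
  rw [Real.norm_eq_abs, abs_mul, abs_of_nonneg h1.1, abs_of_nonneg h2]
  nlinarith [h1.2]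

lemma conv_eq (g : ℝ → ℝ) {ω : ℝ → ℝ} (hω : IsAveragingKernel ω) (c : ℝ) :
    conv g ω c = ∫ t, g (c - t) * ω t := by
  have := MeasureTheory.integral_sub_left_eq_self (fun y => g y * ω (c - y))
    (volume : Measure ℝ) c
  rw [conv, ← this]
  congr 1; funext t; ring_nf

lemma conv_mem (hω : IsAveragingKernel ω) (hGm : Measurable g)
    (hG1 : ∀ x, g x ∈ Icc (0:ℝ) 1) (c : ℝ) : conv g ω c ∈ Icc (0:ℝ) 1 := by
  rw [conv_eq g hω]
  constructor
  · exact integral_nonneg fun t => mul_nonneg (hG1 _).1 (hω.2.1 t)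
  · calc (∫ t, g (c - t) * ω t) ≤ ∫ t, ω t := by
          refine integral_mono (conv_integrand_int' hω hGm hG1 c) (ker_int hω) fun t => ?_
          have := (hG1 (c - t)); nlinarith [hω.2.1 t, this.1, this.2]
    _ = 1 := hω.2.2.2.2

lemma conv_mono (hω : IsAveragingKernel ω) (hg : MemPsi g) : Monotone (conv g ω) := by
  intro x y hxy
  rw [conv_eq g hω, conv_eq g hω]
  refine integral_mono (conv_integrand_int' hω hg.1.measurable hg.2 x)
    (conv_integrand_int' hω hg.1.measurable hg.2 y) fun t => ?_
  exact mul_le_mul_of_nonneg_right (hg.1 (by linarith)) (hω.2.1 t)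

lemma conv_cont (hω : IsAveragingKernel ω) (hg : MemPsi g) : Continuous (conv g ω) := by
  rw [continuous_iff_continuousAt]
  intro x₀
  have : ContinuousAt (fun x => ∫ t, g (x - t) * ω t) x₀ := by
    apply MeasureTheory.continuousAt_of_dominated
      (bound := ω) (F := fun x t => g (x - t) * ω t)
    · filter_upwards with x
      exact (conv_integrand_int' hω hg.1.measurable hg.2 x).aestronglyMeasurable
    · filter_upwards with x
      filter_upwards with t
      have h1 := hg.2 (x - t); have h2 := hω.2.1 t
      rw [Real.norm_eq_abs, abs_mul, abs_of_nonneg h1.1, abs_of_nonneg h2]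
      nlinarith [h1.2]
    · exact hω.2.2.2.1
    · have hcnt : {y : ℝ | ¬ContinuousAt g y}.Countable :=
        hg.1.countable_not_continuousAt
      have : ∀ᵐ t : ℝ, ContinuousAt g (x₀ - t) := by
        have : volume ((fun t => x₀ - t) ⁻¹' {y | ¬ContinuousAt g y}) = 0 := by
          have hc : ((fun t : ℝ => x₀ - t) ⁻¹' {y | ¬ContinuousAt g y}).Countable := by
            exact hcnt.preimage (f := fun t : ℝ => x₀ - t)
              (fun a b hab => by simpa using hab)
          exact hc.measure_zero _
        filter_upwards [measure_eq_zero_iff_ae_notMem.mp this] with t ht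
        simpa using ht
      filter_upwards [this] with t ht
      have hin : ContinuousAt (fun x : ℝ => x - t) x₀ :=
        (continuous_id.sub continuous_const).continuousAt
      exact (ContinuousAt.comp (x := x₀) (g := g) ht hin).mul continuousAt_const
  simpa only [← conv_eq g hω] using this

lemma conv_interp (hω : IsAveragingKernel ω) (hg : MemPsi g) (hgI : Interpolates g 0 1) :
    Interpolates (conv g ω) 0 1 := by
  constructor
  · have : Tendsto (fun x => ∫ t, g (x - t) * ω t) atBot (nhds (∫ t : ℝ, 0 * ω t)) := by
      apply MeasureTheory.tendsto_integral_filter_of_dominated_convergence (bound := ω)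
      · filter_upwards with x
        exact (conv_integrand_int' hω hg.1.measurable hg.2 x).aestronglyMeasurable
      · filter_upwards with x
        filter_upwards with t
        have h1 := hg.2 (x - t); have h2 := hω.2.1 t
        rw [Real.norm_eq_abs, abs_mul, abs_of_nonneg h1.1, abs_of_nonneg h2]
        nlinarith [h1.2]
      · exact hω.2.2.2.1
      · filter_upwards with t
        exact (hgI.1.comp (tendsto_atBot_add_const_right _ (-t) tendsto_id)).mul_const _
    simp only [zero_mul, integral_zero] at this
    simpa only [← conv_eq g hω] using this
  · have : Tendsto (fun x => ∫ t, g (x - t) * ω t) atTop (nhds (∫ t : ℝ, 1 * ω t)) := by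
      apply MeasureTheory.tendsto_integral_filter_of_dominated_convergence (bound := ω)
      · filter_upwards with x
        exact (conv_integrand_int' hω hg.1.measurable hg.2 x).aestronglyMeasurable
      · filter_upwards with x
        filter_upwards with t
        have h1 := hg.2 (x - t); have h2 := hω.2.1 t
        rw [Real.norm_eq_abs, abs_mul, abs_of_nonneg h1.1, abs_of_nonneg h2]
        nlinarith [h1.2]
      · exact hω.2.2.2.1
      · filter_upwards with t
        exact (hgI.2.comp (tendsto_atTop_add_const_right _ (-t) tendsto_id)).mul_const _
    simp only [one_mul] at this
    rw [hω.2.2.2.2] at this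
    simpa only [← conv_eq g hω] using this

def stOf (hm : Monotone u) (hc : Continuous u) : StieltjesFunction ℝ :=
  ⟨u, hm, fun _ => hc.continuousAt.continuousWithinAt⟩

lemma stOf_apply (hm : Monotone u) (hc : Continuous u) (x : ℝ) : stOf hm hc x = u x := rfl

lemma stj_tendsto_bot (hf : MemPsi f) (hI : Interpolates f 0 1) :
    Tendsto (hf.1.stieltjesFunction) atBot (nhds 0) := by
  have h1 : Tendsto (fun x => f (x + 1)) atBot (nhds 0) :=
    hI.1.comp (tendsto_atBot_add_const_right _ 1 tendsto_id)
  refine tendsto_of_tendsto_of_tendsto_of_le_of_le hI.1 h1 (fun x => ?_) (fun x => ?_)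
  · rw [Monotone.stieltjesFunction_eq]; exact hf.1.le_rightLim le_rfl
  · rw [Monotone.stieltjesFunction_eq]; exact hf.1.rightLim_le (by linarith)

lemma stj_tendsto_top (hf : MemPsi f) (hI : Interpolates f 0 1) :
    Tendsto (hf.1.stieltjesFunction) atTop (nhds 1) := by
  have h1 : Tendsto (fun x => f (x + 1)) atTop (nhds 1) :=
    hI.2.comp (tendsto_atTop_add_const_right _ 1 tendsto_id)
  refine tendsto_of_tendsto_of_tendsto_of_le_of_le hI.2 h1 (fun x => ?_) (fun x => ?_)
  · rw [Monotone.stieltjesFunction_eq]; exact hf.1.le_rightLim le_rfl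
  · rw [Monotone.stieltjesFunction_eq]; exact hf.1.rightLim_le (by linarith)

lemma stj_prob (hf : MemPsi f) (hI : Interpolates f 0 1) :
    IsProbabilityMeasure (hf.1.stieltjesFunction).measure :=
  ⟨by rw [StieltjesFunction.measure_univ _ (stj_tendsto_bot hf hI) (stj_tendsto_top hf hI)]
      simp⟩

lemma stj_Iic (hf : MemPsi f) (hI : Interpolates f 0 1) (x : ℝ) :
    (hf.1.stieltjesFunction).measure (Iic x) = ENNReal.ofReal (Function.rightLim f x) := by
  rw [StieltjesFunction.measure_Iic _ (stj_tendsto_bot hf hI), Monotone.stieltjesFunction_eq,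
    sub_zero]

lemma rightLim_mem (hf : MemPsi f) (x : ℝ) : Function.rightLim f x ∈ Icc (0:ℝ) 1 :=
  ⟨le_trans (hf.2 x).1 (hf.1.le_rightLim le_rfl),
   le_trans (hf.1.rightLim_le (lt_add_one x)) (hf.2 (x + 1)).2⟩

lemma map_st (hm : Monotone u) (hc : Continuous u) (hI : Interpolates u 0 1)
    (hu1 : ∀ x, u x ∈ Icc (0:ℝ) 1) :
    Measure.map u (stOf hm hc).measure = volume.restrict (Ioc 0 1) := by
  have hprob : IsProbabilityMeasure (stOf hm hc).measure :=
    ⟨by rw [StieltjesFunction.measure_univ _ hI.1 hI.2]; simp⟩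
  refine Measure.ext_of_Iic _ _ (fun t => ?_)
  rw [Measure.map_apply hc.measurable measurableSet_Iic,
    Measure.restrict_apply measurableSet_Iic]
  rcases lt_or_ge t 0 with ht | ht
  · have h1 : u ⁻¹' Iic t = ∅ := by
      ext x; simp only [mem_preimage, mem_Iic, mem_empty_iff_false, iff_false, not_le]
      exact lt_of_lt_of_le ht (hu1 x).1
    have h2 : Iic t ∩ Ioc 0 1 = ∅ := by
      ext x; simp only [mem_inter_iff, mem_Iic, mem_Ioc, mem_empty_iff_false, iff_false]
      rintro ⟨h3, h4, -⟩; linarith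
    rw [h1, h2]; simp
  rcases le_or_gt 1 t with ht1 | ht1
  · have h1 : u ⁻¹' Iic t = univ := by
      ext x; simp only [mem_preimage, mem_Iic, mem_univ, iff_true]
      exact le_trans (hu1 x).2 ht1
    have h2 : Iic t ∩ Ioc 0 1 = Ioc 0 1 := by
      rw [inter_eq_right]; exact fun x hx => le_trans hx.2 ht1
    rw [h1, h2, measure_univ, Real.volume_Ioc]; norm_num
  · have h2 : Iic t ∩ Ioc 0 1 = Ioc 0 t := by
      ext x; simp only [mem_inter_iff, mem_Iic, mem_Ioc]
      constructor
      · rintro ⟨h3, h4, h5⟩; exact ⟨h4, h3⟩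
      · rintro ⟨h4, h5⟩; exact ⟨h5, h4, le_trans h5 (le_of_lt ht1)⟩
    rw [h2, Real.volume_Ioc]
    by_cases hS : {x | u x ≤ t}.Nonempty
    · obtain ⟨x₀, hx₀⟩ : ∃ x₀, t < u x₀ := (hI.2.eventually (eventually_gt_nhds ht1)).exists
      have hbdd : BddAbove {x | u x ≤ t} := by
        refine ⟨x₀, fun x hx => ?_⟩
        by_contra hcon
        push_neg at hcon
        exact absurd (le_trans (hm hcon.le) hx) (not_le.mpr hx₀)
      have hclosed : IsClosed {x | u x ≤ t} := isClosed_le hc continuous_const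
      have hsmem : sSup {x | u x ≤ t} ∈ {x | u x ≤ t} := hclosed.csSup_mem hS hbdd
      set s := sSup {x | u x ≤ t} with hs
      have hSeq : u ⁻¹' Iic t = Iic s := by
        ext x
        exact ⟨fun hx => le_csSup hbdd hx, fun hx => le_trans (hm hx) hsmem⟩
      have hust : u s = t := by
        refine le_antisymm hsmem ?_
        by_contra hcon
        push_neg at hcon
        have hev : ∀ᶠ x in nhdsWithin s (Ioi s), u x < t :=
          ((hc.continuousAt.eventually (eventually_lt_nhds hcon)).filter_mono
            nhdsWithin_le_nhds)
        have hev2 : ∀ᶠ x in nhdsWithin s (Ioi s), s < x :=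
          eventually_mem_nhdsWithin.mono (fun x hx => hx)
        obtain ⟨x, hx1, hx2⟩ := (hev.and hev2).exists
        exact absurd (le_csSup hbdd (le_of_lt hx1)) (not_le.mpr hx2)
      rw [hSeq, StieltjesFunction.measure_Iic _ hI.1, stOf_apply, hust, sub_zero]
    · have h1 : u ⁻¹' Iic t = ∅ := not_nonempty_iff_eq_empty.mp hS
      have ht0 : t ≤ 0 := by
        refine ge_of_tendsto hI.1 ?_
        filter_upwards with x
        by_contra hcon
        exact hS ⟨x, (not_le.mp hcon).le⟩
      have : t = 0 := le_antisymm ht0 ht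
      rw [h1, this]; simp

lemma clamp_mem (t : ℝ) : max 0 (min 1 t) ∈ Icc (0:ℝ) 1 :=
  ⟨le_max_left _ _, max_le zero_le_one (min_le_left _ _)⟩

lemma clampX_eq (t : ℝ) (ht : t ∈ Icc (0:ℝ) 1) : clampX h t = h t := by
  rw [clampX, min_eq_right ht.2, max_eq_right ht.1]

lemma clampX_mono (hh : MemX h) : Monotone (clampX h) := by
  intro s t hst
  exact hh.1 (clamp_mem s) (clamp_mem t)
    (max_le_max le_rfl (min_le_min le_rfl hst))

lemma clampX_mem (hh : MemX h) (t : ℝ) : clampX h t ∈ Icc (0:ℝ) 1 := hh.2 (clamp_mem t)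

lemma im_bddAbove (hh : MemX h) (w : ℝ) (hw : w ≤ 1) : ∀ y ∈ h '' Ico 0 w, y ≤ h 1 := by
  rintro y ⟨t, ht, rfl⟩
  exact hh.1 ⟨ht.1, le_trans ht.2.le hw⟩ (right_mem_Icc.mpr zero_le_one)
    (le_trans ht.2.le hw)

lemma lm_le (hh : MemX h) {w : ℝ} (hw : w ∈ Icc (0:ℝ) 1) : lm h w ≤ h w := by
  rw [lm]
  split_ifs with h0
  · exact (hh.2 hw).1
  · push_neg at h0
    refine csSup_le ⟨h 0, 0, ⟨le_rfl, h0⟩, rfl⟩ ?_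
    rintro y ⟨t, ht, rfl⟩
    exact hh.1 ⟨ht.1, le_trans ht.2.le hw.2⟩ hw ht.2.le

lemma le_rm (hh : MemX h) {w : ℝ} (hw : w ∈ Icc (0:ℝ) 1) : h w ≤ rm h w := by
  rw [rm]
  split_ifs with h1
  · exact (hh.2 hw).2
  · push_neg at h1
    refine le_csInf ⟨h 1, 1, ⟨h1, le_rfl⟩, rfl⟩ ?_
    rintro y ⟨t, ht, rfl⟩
    exact hh.1 hw ⟨le_trans hw.1 ht.1.le, ht.2⟩ ht.1.le

lemma lm_rm_of_contAt (hh : MemX h) {w : ℝ} (hw : w ∈ Ioo (0:ℝ) 1)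
    (hcont : ContinuousAt (clampX h) w) : lm h w = h w ∧ rm h w = h w := by
  have hw' : w ∈ Icc (0:ℝ) 1 := ⟨hw.1.le, hw.2.le⟩
  have hcw : clampX h w = h w := clampX_eq w hw'
  constructor
  · refine le_antisymm (lm_le hh hw') ?_
    by_contra hcon
    push_neg at hcon
    simp only [lm, if_neg (not_le.mpr hw.1)] at hcon ⊢
    have hev : ∀ᶠ x in nhdsWithin w (Iio w), sSup (h '' Ico 0 w) < clampX h x := by
      refine ((hcont.eventually (eventually_gt_nhds (by rw [hcw] at *; exact hcon))).filter_mono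
        nhdsWithin_le_nhds)
    have hev2 : Ioo (0:ℝ) w ∈ nhdsWithin w (Iio w) :=
      Ioo_mem_nhdsLT_of_mem ⟨hw.1, le_rfl⟩
    obtain ⟨x, hx1, hx2⟩ := (hev.and (eventually_of_mem hev2 (fun x hx => hx))).exists
    have hxi : x ∈ Icc (0:ℝ) 1 := ⟨hx2.1.le, le_trans hx2.2.le hw.2.le⟩
    rw [clampX_eq x hxi] at hx1
    have hub : h x ≤ sSup (h '' Ico 0 w) := by
      refine le_csSup ⟨h 1, im_bddAbove hh w hw.2.le⟩ ⟨x, ⟨hx2.1.le, hx2.2⟩, rfl⟩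
    exact absurd hub (not_le.mpr hx1)
  · refine le_antisymm ?_ (le_rm hh hw')
    by_contra hcon
    push_neg at hcon
    simp only [rm, if_neg (not_le.mpr hw.2)] at hcon ⊢
    have hev : ∀ᶠ x in nhdsWithin w (Ioi w), clampX h x < sInf (h '' Ioc w 1) := by
      refine ((hcont.eventually (eventually_lt_nhds (by rw [hcw] at *; exact hcon))).filter_mono
        nhdsWithin_le_nhds)
    have hev2 : Ioo w (1:ℝ) ∈ nhdsWithin w (Ioi w) :=
      Ioo_mem_nhdsGT_of_mem ⟨le_rfl, hw.2⟩
    obtain ⟨x, hx1, hx2⟩ := (hev.and (eventually_of_mem hev2 (fun x hx => hx))).exists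
    have hxi : x ∈ Icc (0:ℝ) 1 := ⟨le_trans hw.1.le hx2.1.le, hx2.2.le⟩
    rw [clampX_eq x hxi] at hx1
    have hlb : sInf (h '' Ioc w 1) ≤ h x := by
      refine csInf_le ⟨h 0, ?_⟩ ⟨x, ⟨hx2.1, hx2.2.le⟩, rfl⟩
      rintro y ⟨t, ht, rfl⟩
      exact hh.1 (left_mem_Icc.mpr zero_le_one) ⟨le_trans hw.1.le ht.1.le, ht.2⟩
        (le_trans hw.1.le ht.1.le)
    exact absurd hlb (not_le.mpr hx1)

lemma P2 (hh : MemX h) (hm : Monotone u) (hc : Continuous u)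
    (hI : Interpolates u 0 1) (hu1 : ∀ x, u x ∈ Icc (0:ℝ) 1)
    (hG : ∀ x, G x ∈ Icc (lm h (u x)) (rm h (u x))) :
    ∫⁻ x, ENNReal.ofReal (G x) ∂(stOf hm hc).measure
      = ∫⁻ t in Ioc 0 1, ENNReal.ofReal (clampX h t) := by
  set μu := (stOf hm hc).measure with hμu
  have hEcnt : ({w | ¬ContinuousAt (clampX h) w} ∪ ({0, 1} : Set ℝ)).Countable :=
    ((clampX_mono hh).countable_not_continuousAt).union (by simp)
  set E := {w | ¬ContinuousAt (clampX h) w} ∪ ({0, 1} : Set ℝ) with hE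
  have hEmeas : MeasurableSet E := hEcnt.measurableSet
  have hnull : μu {x | u x ∈ E} = 0 := by
    have : {x | u x ∈ E} = u ⁻¹' E := rfl
    rw [this, ← Measure.map_apply hc.measurable hEmeas, map_st hm hc hI hu1,
      Measure.restrict_apply hEmeas]
    exact measure_mono_null inter_subset_left (hEcnt.measure_zero volume)
  have hae : ∀ᵐ x ∂μu, G x = clampX h (u x) := by
    have h2 : ∀ᵐ x ∂μu, u x ∉ E := by
      rw [ae_iff]
      simpa using hnull
    filter_upwards [h2] with x hx
    rw [hE, mem_union, not_or] at hx
    have hx1 : ContinuousAt (clampX h) (u x) := not_not.mp hx.1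
    have hx2 : u x ∈ Ioo (0:ℝ) 1 := by
      have := hu1 x
      have h0 : u x ≠ 0 ∧ u x ≠ 1 := by
        constructor <;> intro hc' <;> apply hx.2 <;> simp [hc']
      exact ⟨lt_of_le_of_ne this.1 (Ne.symm h0.1), lt_of_le_of_ne this.2 h0.2⟩
    obtain ⟨hl, hr⟩ := lm_rm_of_contAt hh hx2 hx1
    have := hG x
    rw [hl, hr] at this
    rw [clampX_eq (u x) ⟨hx2.1.le, hx2.2.le⟩]
    exact le_antisymm this.2 this.1
  calc ∫⁻ x, ENNReal.ofReal (G x) ∂μu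
      = ∫⁻ x, ENNReal.ofReal (clampX h (u x)) ∂μu :=
        lintegral_congr_ae (hae.mono fun x hx => by simp [hx])
    _ = ∫⁻ w, ENNReal.ofReal (clampX h w) ∂(Measure.map u μu) :=
        (lintegral_map (ENNReal.measurable_ofReal.comp (clampX_mono hh).measurable)
          hc.measurable).symm
    _ = ∫⁻ t in Ioc 0 1, ENNReal.ofReal (clampX h t) := by
        rw [hμu, map_st hm hc hI hu1]

def kk (ω : ℝ → ℝ) (c : ℝ) : ℝ≥0∞ := ∫⁻ t in Iic c, ENNReal.ofReal (ω t)

lemma kk_mono : Monotone (kk ω) := fun a b hab =>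
  lintegral_mono' (Measure.restrict_mono (Iic_subset_Iic.mpr hab) le_rfl) le_rfl

lemma kk_shift (y b : ℝ) : ∫⁻ x in Iic b, ENNReal.ofReal (ω (x - y)) = kk ω (b - y) := by
  have him : (fun x : ℝ => x - y) '' Iic b = Iic (b - y) := by
    ext z
    simp only [mem_image, mem_Iic]
    constructor
    · rintro ⟨x, hx, rfl⟩; linarith
    · intro hz; exact ⟨z + y, by linarith, by ring⟩
  have := (measurePreserving_sub_right (volume : Measure ℝ) y).setLIntegral_comp_emb
    (MeasurableEquiv.subRight y).measurableEmbedding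
    (fun t => ENNReal.ofReal (ω t)) (Iic b)
  rw [him] at this
  exact this

lemma kk_total (hω : IsAveragingKernel ω) (t : ℝ) : kk ω t + kk ω (-t) = 1 := by
  have hneg : kk ω (-t) = ∫⁻ x in Ici t, ENNReal.ofReal (ω x) := by
    have him : (Neg.neg : ℝ → ℝ) '' Ici t = Iic (-t) := by
      ext z
      simp only [mem_image, mem_Ici, mem_Iic]
      constructor
      · rintro ⟨x, hx, rfl⟩; linarith
      · intro hz; exact ⟨-z, by linarith, by ring⟩
    have := (Measure.measurePreserving_neg (volume : Measure ℝ)).setLIntegral_comp_emb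
      (MeasurableEquiv.neg ℝ).measurableEmbedding
      (fun s => ENNReal.ofReal (ω s)) (Ici t)
    rw [him] at this
    rw [kk, ← this]
    exact lintegral_congr fun x => by rw [hω.1]
  rw [hneg, kk]
  have hres : (volume : Measure ℝ).restrict (Iic t) + volume.restrict (Ici t)
      = volume.restrict univ + volume.restrict {t} := by
    rw [← Iic_union_Ici (a := t), ← Measure.restrict_union_add_inter _ measurableSet_Ici]
    congr 1
    rw [Iic_inter_Ici, Icc_self]
  have := congrArg (fun μ => ∫⁻ x, ENNReal.ofReal (ω x) ∂μ) hres
  simp only [lintegral_add_measure] at this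
  rw [this]
  have h1 : ∫⁻ x in ({t} : Set ℝ), ENNReal.ofReal (ω x) ∂volume = 0 := by
    rw [Measure.restrict_eq_zero.mpr (measure_singleton t)]
    simp
  have h2 : ∫⁻ x in (univ : Set ℝ), ENNReal.ofReal (ω x) ∂volume = 1 := by
    rw [Measure.restrict_univ,
      ← MeasureTheory.ofReal_integral_eq_lintegral_ofReal hω.2.2.2.1
        (ae_of_all _ hω.2.1), hω.2.2.2.2]
    simp
  rw [h1, h2, add_zero]

lemma rightLim_of_cont {x : ℝ} (hcont : ContinuousAt f x) :
    Function.rightLim f x = f x :=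
  rightLim_eq_of_tendsto (h := nhdsGT_neBot x)
    (hcont.continuousWithinAt.tendsto)

lemma ae_eq_rightLim_comp (hf : MemPsi f) (c : ℝ) :
    ∀ᵐ t : ℝ, f (c - t) = Function.rightLim f (c - t) := by
  have hcnt : ((fun t : ℝ => c - t) ⁻¹' {y | ¬ContinuousAt f y}).Countable :=
    hf.1.countable_not_continuousAt.preimage (fun a b hab => by simpa using hab)
  have h0 := hcnt.measure_zero (volume : Measure ℝ)
  rw [← compl_compl ((fun t : ℝ => c - t) ⁻¹' {y | ¬ContinuousAt f y})] at h0
  filter_upwards [measure_eq_zero_iff_ae_notMem.mp (hcnt.measure_zero volume)] with t ht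
  have : ContinuousAt f (c - t) := not_not.mp ht
  exact (rightLim_of_cont this).symm

/-- CDF of the convolution against the Stieltjes measure. -/
lemma cdf_conv (hω : IsAveragingKernel ω) (hf : MemPsi f) (hfI : Interpolates f 0 1) (c : ℝ) :
    ENNReal.ofReal (conv f ω c)
      = ∫⁻ y, kk ω (c - y) ∂(hf.1.stieltjesFunction).measure := by
  set μf := (hf.1.stieltjesFunction).measure with hμf
  have step1 : ENNReal.ofReal (conv f ω c) = ∫⁻ t, ENNReal.ofReal (f (c - t) * ω t) := by
    rw [conv_eq f hω, MeasureTheory.ofReal_integral_eq_lintegral_ofReal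
      (conv_integrand_int' hω hf.1.measurable hf.2 c)
      (ae_of_all _ fun t => mul_nonneg (hf.2 _).1 (hω.2.1 t))]
  have step2 : ∫⁻ t, ENNReal.ofReal (f (c - t) * ω t)
      = ∫⁻ t, μf (Iic (c - t)) * ENNReal.ofReal (ω t) := by
    refine lintegral_congr_ae ((ae_eq_rightLim_comp hf c).mono fun t ht => ?_)
    show ENNReal.ofReal (f (c - t) * ω t) = μf (Iic (c - t)) * ENNReal.ofReal (ω t)
    rw [ht, stj_Iic hf hfI, ENNReal.ofReal_mul (rightLim_mem hf _).1]
  have hFmeas : Measurable (Function.uncurry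
      (fun t y : ℝ => if y + t ≤ c then ENNReal.ofReal (ω t) else 0)) := by
    apply Measurable.ite
    · exact measurableSet_le (measurable_snd.add measurable_fst) measurable_const
    · exact ENNReal.measurable_ofReal.comp ((ker_meas hω).comp measurable_fst)
    · exact measurable_const
  have step3 : ∫⁻ t, μf (Iic (c - t)) * ENNReal.ofReal (ω t)
      = ∫⁻ t, ∫⁻ y, (if y + t ≤ c then ENNReal.ofReal (ω t) else 0) ∂μf := by
    refine lintegral_congr fun t => ?_
    have : ∀ y : ℝ, (if y + t ≤ c then ENNReal.ofReal (ω t) else 0)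
        = (Iic (c - t)).indicator (fun _ => ENNReal.ofReal (ω t)) y := by
      intro y
      rw [Set.indicator_apply]
      congr 1
      simp [mem_Iic, le_sub_iff_add_le]
    simp_rw [this]
    rw [lintegral_indicator measurableSet_Iic, setLIntegral_const, mul_comm]
  have step4 : ∫⁻ t, ∫⁻ y, (if y + t ≤ c then ENNReal.ofReal (ω t) else 0) ∂μf
      = ∫⁻ y, ∫⁻ t, (if y + t ≤ c then ENNReal.ofReal (ω t) else 0) ∂volume ∂μf :=
    lintegral_lintegral_swap hFmeas.aemeasurable
  have step5 : ∀ y : ℝ, ∫⁻ t, (if y + t ≤ c then ENNReal.ofReal (ω t) else 0) ∂volume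
      = kk ω (c - y) := by
    intro y
    have : ∀ t : ℝ, (if y + t ≤ c then ENNReal.ofReal (ω t) else 0)
        = (Iic (c - y)).indicator (fun s => ENNReal.ofReal (ω s)) t := by
      intro t
      rw [Set.indicator_apply]
      congr 1
      simp only [mem_Iic, eq_iff_iff]
      constructor <;> intro <;> linarith
    simp_rw [this]
    rw [lintegral_indicator measurableSet_Iic]
    rfl
  rw [step1, step2, step3, step4]
  exact lintegral_congr step5


lemma P1 (hω : IsAveragingKernel ω) (hf : MemPsi f) (hg : MemPsi g)
    (hfI : Interpolates f 0 1) (hgI : Interpolates g 0 1) :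
    ∫⁻ x, ENNReal.ofReal (conv f ω x) ∂(hg.1.stieltjesFunction).measure
      + ∫⁻ y, ENNReal.ofReal (conv g ω y) ∂(hf.1.stieltjesFunction).measure = 1 := by
  set μf := (hf.1.stieltjesFunction).measure with hμf
  set μg := (hg.1.stieltjesFunction).measure with hμg
  haveI : IsProbabilityMeasure μf :=
    ⟨by rw [StieltjesFunction.measure_univ _ (stj_tendsto_bot hf hfI) (stj_tendsto_top hf hfI)]
        simp⟩
  haveI : IsProbabilityMeasure μg :=
    ⟨by rw [StieltjesFunction.measure_univ _ (stj_tendsto_bot hg hgI) (stj_tendsto_top hg hgI)]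
        simp⟩
  have h1 : ∫⁻ x, ENNReal.ofReal (conv f ω x) ∂μg
      = ∫⁻ x, ∫⁻ y, kk ω (x - y) ∂μf ∂μg :=
    lintegral_congr fun x => cdf_conv hω hf hfI x
  have h2 : ∫⁻ y, ENNReal.ofReal (conv g ω y) ∂μf
      = ∫⁻ x, ∫⁻ y, kk ω (y - x) ∂μf ∂μg := by
    have h3 : ∫⁻ y, ENNReal.ofReal (conv g ω y) ∂μf
        = ∫⁻ y, ∫⁻ x, kk ω (y - x) ∂μg ∂μf :=
      lintegral_congr fun y => cdf_conv hω hg hgI y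
    rw [h3]
    exact lintegral_lintegral_swap
      ((kk_mono.measurable.comp (measurable_fst.sub measurable_snd)).aemeasurable)
  have hmeas1 : Measurable fun x => ∫⁻ y, kk ω (x - y) ∂μf :=
    Measurable.lintegral_prod_right
      (kk_mono.measurable.comp (measurable_fst.sub measurable_snd))
  rw [h1, h2, ← lintegral_add_left hmeas1]
  have : ∀ x, (∫⁻ y, kk ω (x - y) ∂μf) + ∫⁻ y, kk ω (y - x) ∂μf
      = ∫⁻ y, (kk ω (x - y) + kk ω (y - x)) ∂μf := by
    intro x
    have hme : Measurable fun y => kk ω (x - y) :=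
      kk_mono.measurable.comp (measurable_const.sub measurable_id)
    exact (lintegral_add_left hme _).symm
  simp_rw [this]
  have : ∀ x y : ℝ, kk ω (x - y) + kk ω (y - x) = 1 := by
    intro x y
    have := kk_total hω (x - y)
    rwa [neg_sub] at this
  simp_rw [this]
  simp


lemma st_density (hω : IsAveragingKernel ω) (hf : MemPsi f) (hfI : Interpolates f 0 1)
    (β : ℝ) {w : ℝ → ℝ} (hm : Monotone w) (hc : Continuous w)
    (hI : Interpolates w 0 1) (hweq : ∀ x, w x = conv f ω (x + β)) :
    (stOf hm hc).measure = volume.withDensity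
      (fun x => ∫⁻ y, ENNReal.ofReal (ω (x + β - y)) ∂(hf.1.stieltjesFunction).measure) := by
  set μf := (hf.1.stieltjesFunction).measure with hμf
  have hunc : Measurable (Function.uncurry
      (fun x y : ℝ => ENNReal.ofReal (ω (x + β - y)))) := by
    apply ENNReal.measurable_ofReal.comp
    exact (ker_meas hω).comp ((measurable_fst.add_const β).sub measurable_snd)
  have hρ : Measurable fun x => ∫⁻ y, ENNReal.ofReal (ω (x + β - y)) ∂μf :=
    Measurable.lintegral_prod_right hunc
  haveI : IsProbabilityMeasure (stOf hm hc).measure :=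
    ⟨by rw [StieltjesFunction.measure_univ _ hI.1 hI.2]; simp⟩
  refine Measure.ext_of_Iic _ _ fun b => ?_
  rw [StieltjesFunction.measure_Iic _ hI.1, withDensity_apply _ measurableSet_Iic]
  have hL : (stOf hm hc) b - 0 = conv f ω (b + β) := by
    show w b - 0 = _
    rw [hweq b, sub_zero]
  rw [hL, cdf_conv hω hf hfI]
  have hswap : ∫⁻ x in Iic b, (∫⁻ y, ENNReal.ofReal (ω (x + β - y)) ∂μf) ∂volume
      = ∫⁻ y, (∫⁻ x in Iic b, ENNReal.ofReal (ω (x + β - y)) ∂volume) ∂μf :=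
    lintegral_lintegral_swap hunc.aemeasurable
  rw [hswap]
  refine lintegral_congr fun y => ?_
  have : ∀ x : ℝ, ENNReal.ofReal (ω (x + β - y)) = ENNReal.ofReal (ω (x - (y - β))) := by
    intro x; congr 2; ring
  simp_rw [this]
  rw [kk_shift (y - β) b]
  congr 1
  ring

lemma int_against_density (hω : IsAveragingKernel ω) (hf : MemPsi f)
    (hfI : Interpolates f 0 1) (β : ℝ) {w : ℝ → ℝ} (hm : Monotone w) (hc : Continuous w)
    (hI : Interpolates w 0 1) (hweq : ∀ x, w x = conv f ω (x + β))
    (G : ℝ → ℝ) (hGm : Measurable G) (hG1 : ∀ x, G x ∈ Icc (0:ℝ) 1) :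
    ∫⁻ x, ENNReal.ofReal (G x) ∂(stOf hm hc).measure
      = ∫⁻ y, ENNReal.ofReal (conv G ω (y - β)) ∂(hf.1.stieltjesFunction).measure := by
  set μf := (hf.1.stieltjesFunction).measure with hμf
  have hunc : Measurable (Function.uncurry
      (fun x y : ℝ => ENNReal.ofReal (ω (x + β - y)) * ENNReal.ofReal (G x))) := by
    refine Measurable.mul (f := fun p : ℝ × ℝ => ENNReal.ofReal (ω (p.1 + β - p.2)))
      (g := fun p : ℝ × ℝ => ENNReal.ofReal (G p.1)) ?_ ?_
    · exact ENNReal.measurable_ofReal.comp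
        ((ker_meas hω).comp ((measurable_fst.add_const β).sub measurable_snd))
    · exact ENNReal.measurable_ofReal.comp (hGm.comp measurable_fst)
  have hρ : Measurable fun x => ∫⁻ y, ENNReal.ofReal (ω (x + β - y)) ∂μf :=
    Measurable.lintegral_prod_right (ENNReal.measurable_ofReal.comp
      ((ker_meas hω).comp ((measurable_fst.add_const β).sub measurable_snd)))
  rw [st_density hω hf hfI β hm hc hI hweq,
    lintegral_withDensity_eq_lintegral_mul _ hρ
      (show Measurable fun x => ENNReal.ofReal (G x) from ENNReal.measurable_ofReal.comp hGm)]
  have h1 : ∀ x : ℝ, ((fun x => ∫⁻ y, ENNReal.ofReal (ω (x + β - y)) ∂μf)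
        * fun x => ENNReal.ofReal (G x)) x
      = ∫⁻ y, ENNReal.ofReal (ω (x + β - y)) * ENNReal.ofReal (G x) ∂μf := by
    intro x
    simp only [Pi.mul_apply]
    have hme : Measurable fun y : ℝ => ENNReal.ofReal (ω (x + β - y)) :=
      ENNReal.measurable_ofReal.comp ((ker_meas hω).comp (measurable_const.sub measurable_id))
    exact (lintegral_mul_const'' _ hme.aemeasurable).symm
  simp_rw [h1]
  rw [lintegral_lintegral_swap hunc.aemeasurable]
  refine lintegral_congr fun y => ?_
  have h2 : ∀ x : ℝ, ENNReal.ofReal (ω (x + β - y)) * ENNReal.ofReal (G x)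
      = ENNReal.ofReal (G x * ω ((y - β) - x)) := by
    intro x
    rw [← ENNReal.ofReal_mul (hω.2.1 _), mul_comm]
    congr 2
    rw [← hω.1 (x + β - y)]
    congr 1
    ring
  simp_rw [h2]
  rw [← MeasureTheory.ofReal_integral_eq_lintegral_ofReal
    (conv_integrand_int hω hGm hG1 (y - β))
    (ae_of_all _ fun x => mul_nonneg (hG1 _).1 (hω.2.1 _))]
  rfl

lemma XinvS_bddBelow (w : ℝ) : BddBelow ({1} ∪ {u ∈ Icc (0:ℝ) 1 | w ≤ h u}) := by
  refine ⟨0, ?_⟩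
  rintro u (hu | hu)
  · simp at hu; simp [hu]
  · exact hu.1.1

lemma XinvS_nonempty (w : ℝ) : ({1} ∪ {u ∈ Icc (0:ℝ) 1 | w ≤ h u}).Nonempty :=
  ⟨1, Or.inl rfl⟩

lemma Xinv_mem (w : ℝ) : Xinv h w ∈ Icc (0:ℝ) 1 := by
  constructor
  · refine le_csInf (XinvS_nonempty w) ?_
    rintro u (hu | hu)
    · simp at hu; simp [hu]
    · exact hu.1.1
  · exact csInf_le (XinvS_bddBelow w) (Or.inl rfl)

lemma Xinv_mono : Monotone (Xinv h) := by
  intro w w' hww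
  refine csInf_le_csInf (XinvS_bddBelow w) (XinvS_nonempty w') ?_
  rintro u (hu | hu)
  · exact Or.inl hu
  · exact Or.inr ⟨hu.1, le_trans hww hu.2⟩

lemma Xinv_vol (hh : MemX h) (w : ℝ) :
    volume (Icc (0:ℝ) 1 ∩ {t | clampX h t < w}) = ENNReal.ofReal (Xinv h w) := by
  set s := Xinv h w with hs
  have hs01 : s ∈ Icc (0:ℝ) 1 := Xinv_mem w
  have pf1 : Ico (0:ℝ) s ⊆ Icc (0:ℝ) 1 ∩ {t | clampX h t < w} := by
    intro t ht
    have ht1 : t ∈ Icc (0:ℝ) 1 := ⟨ht.1, le_trans ht.2.le hs01.2⟩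
    refine ⟨ht1, ?_⟩
    have hnm : t ∉ ({1} ∪ {u ∈ Icc (0:ℝ) 1 | w ≤ h u}) :=
      notMem_of_lt_csInf ht.2 (XinvS_bddBelow w)
    simp only [mem_union, mem_setOf_eq, not_or, not_and] at hnm
    have := hnm.2 ht1
    rw [mem_setOf_eq, clampX_eq t ht1]
    linarith [not_le.mp this]
  have pf2 : Icc (0:ℝ) 1 ∩ {t | clampX h t < w} ⊆ Icc (0:ℝ) s := by
    rintro t ⟨ht1, ht2⟩
    rw [mem_setOf_eq, clampX_eq t ht1] at ht2
    refine ⟨ht1.1, ?_⟩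
    by_contra hcon
    push_neg at hcon
    obtain ⟨u, hu, hut⟩ := exists_lt_of_csInf_lt (XinvS_nonempty w) hcon
    rcases hu with hu | hu
    · simp only [mem_singleton_iff] at hu
      rw [hu] at hut
      linarith [ht1.2]
    · have := hh.1 hu.1 ht1 hut.le
      linarith [hu.2]
  refine le_antisymm ?_ ?_
  · calc volume (Icc (0:ℝ) 1 ∩ {t | clampX h t < w}) ≤ volume (Icc (0:ℝ) s) :=
        measure_mono pf2
      _ = ENNReal.ofReal s := by rw [Real.volume_Icc, sub_zero]
  · calc ENNReal.ofReal s = volume (Ico (0:ℝ) s) := by rw [Real.volume_Ico, sub_zero]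
      _ ≤ _ := measure_mono pf1

lemma young_enn (hh : MemX h) :
    (∫⁻ w in Ioc (0:ℝ) 1, ENNReal.ofReal (Xinv h w))
      + (∫⁻ t in Ioc (0:ℝ) 1, ENNReal.ofReal (clampX h t)) = 1 := by
  have hclm : Measurable (clampX h) := (clampX_mono hh).measurable
  have key : ∀ w, ENNReal.ofReal (Xinv h w)
      = ∫⁻ t in Icc (0:ℝ) 1, (if clampX h t < w then (1:ℝ≥0∞) else 0) := by
    intro w
    rw [← Xinv_vol hh w]
    have : ∀ t : ℝ, (if clampX h t < w then (1:ℝ≥0∞) else 0)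
        = ({t | clampX h t < w}).indicator (fun _ => (1:ℝ≥0∞)) t := by
      intro t; rw [Set.indicator_apply]; rfl
    simp_rw [this]
    rw [lintegral_indicator (measurableSet_lt hclm measurable_const),
      setLIntegral_one, Measure.restrict_apply (measurableSet_lt hclm measurable_const),
      inter_comm]
  have hunc : Measurable (Function.uncurry
      (fun w t : ℝ => if clampX h t < w then (1:ℝ≥0∞) else 0)) := by
    apply Measurable.ite _ measurable_const measurable_const
    exact measurableSet_lt (hclm.comp measurable_snd) measurable_fst
  calc (∫⁻ w in Ioc (0:ℝ) 1, ENNReal.ofReal (Xinv h w))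
        + (∫⁻ t in Ioc (0:ℝ) 1, ENNReal.ofReal (clampX h t))
      = (∫⁻ w in Ioc (0:ℝ) 1, ∫⁻ t in Icc (0:ℝ) 1,
          (if clampX h t < w then (1:ℝ≥0∞) else 0))
        + (∫⁻ t in Ioc (0:ℝ) 1, ENNReal.ofReal (clampX h t)) := by
        rw [lintegral_congr key]
    _ = (∫⁻ t in Icc (0:ℝ) 1, ∫⁻ w in Ioc (0:ℝ) 1,
          (if clampX h t < w then (1:ℝ≥0∞) else 0))
        + (∫⁻ t in Ioc (0:ℝ) 1, ENNReal.ofReal (clampX h t)) := by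
        rw [lintegral_lintegral_swap hunc.aemeasurable]
    _ = (∫⁻ t in Icc (0:ℝ) 1, ENNReal.ofReal (1 - clampX h t))
        + (∫⁻ t in Ioc (0:ℝ) 1, ENNReal.ofReal (clampX h t)) := by
        congr 1
        refine lintegral_congr fun t => ?_
        have : ∀ w : ℝ, (if clampX h t < w then (1:ℝ≥0∞) else 0)
            = ({w | clampX h t < w}).indicator (fun _ => (1:ℝ≥0∞)) w := by
          intro w; rw [Set.indicator_apply]; rfl
        simp_rw [this]
        rw [show {w : ℝ | clampX h t < w} = Ioi (clampX h t) from rfl]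
        rw [lintegral_indicator measurableSet_Ioi (μ := volume.restrict (Ioc 0 1)),
          setLIntegral_one, Measure.restrict_apply measurableSet_Ioi]
        have he := clampX_mem hh t
        have : Ioi (clampX h t) ∩ Ioc (0:ℝ) 1 = Ioc (clampX h t) 1 := by
          ext x
          simp only [mem_inter_iff, mem_Ioi, mem_Ioc]
          constructor
          · rintro ⟨h1, h2, h3⟩; exact ⟨h1, h3⟩
          · rintro ⟨h1, h2⟩; exact ⟨h1, lt_of_le_of_lt he.1 h1, h2⟩
        rw [this, Real.volume_Ioc]
    _ = (∫⁻ t in Ioc (0:ℝ) 1, ENNReal.ofReal (1 - clampX h t))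
        + (∫⁻ t in Ioc (0:ℝ) 1, ENNReal.ofReal (clampX h t)) := by
        congr 1
        exact setLIntegral_congr (Ioc_ae_eq_Icc).symm
    _ = ∫⁻ t in Ioc (0:ℝ) 1, (ENNReal.ofReal (1 - clampX h t)
          + ENNReal.ofReal (clampX h t)) := by
        rw [← lintegral_add_left]
        exact ENNReal.measurable_ofReal.comp (measurable_const.sub hclm)
    _ = ∫⁻ _ in Ioc (0:ℝ) 1, (1:ℝ≥0∞) := by
        refine lintegral_congr fun t => ?_
        have he := clampX_mem hh t
        rw [← ENNReal.ofReal_add (by linarith [he.2]) he.1, sub_add_cancel,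
          ENNReal.ofReal_one]
    _ = 1 := by rw [setLIntegral_one, Real.volume_Ioc]; norm_num

lemma shift_int (hf : MemPsi f) (hfI : Interpolates f 0 1) {β : ℝ} (hβ : 0 ≤ β) :
    Integrable (fun s => f s - f (s - β)) ∧ (∫ s, (f s - f (s - β))) = β := by
  set μf := (hf.1.stieltjesFunction).measure with hμf
  haveI : IsProbabilityMeasure μf :=
    ⟨by rw [StieltjesFunction.measure_univ _ (stj_tendsto_bot hf hfI) (stj_tendsto_top hf hfI)]
        simp⟩
  have hmeas : Measurable fun s => f s - f (s - β) :=
    hf.1.measurable.sub (hf.1.measurable.comp (measurable_id.sub_const β))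
  have hnn : ∀ s, 0 ≤ f s - f (s - β) := fun s => sub_nonneg.mpr (hf.1 (by linarith))
  have hae : ∀ᵐ s : ℝ, f s = Function.rightLim f s ∧ f (s - β) = Function.rightLim f (s - β) := by
    have hcnt := hf.1.countable_not_continuousAt
    have hc1 := hcnt.measure_zero (volume : Measure ℝ)
    have hcnt2 : ((fun s : ℝ => s - β) ⁻¹' {y | ¬ContinuousAt f y}).Countable :=
      hcnt.preimage (fun a b hab => by simpa using hab)
    have hc2 := hcnt2.measure_zero (volume : Measure ℝ)
    filter_upwards [measure_eq_zero_iff_ae_notMem.mp hc1, measure_eq_zero_iff_ae_notMem.mp hc2]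
      with s hs1 hs2
    exact ⟨(rightLim_of_cont (not_not.mp hs1)).symm,
      (rightLim_of_cont (not_not.mp hs2)).symm⟩
  have key : ∫⁻ s, ENNReal.ofReal (f s - f (s - β)) = ENNReal.ofReal β := by
    have h1 : ∫⁻ s, ENNReal.ofReal (f s - f (s - β))
        = ∫⁻ s, μf (Ioc (s - β) s) := by
      refine lintegral_congr_ae (hae.mono fun s hs => ?_)
      show ENNReal.ofReal (f s - f (s - β)) = μf (Ioc (s - β) s)
      rw [StieltjesFunction.measure_Ioc, Monotone.stieltjesFunction_eq,
        Monotone.stieltjesFunction_eq, ← hs.1, ← hs.2]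
    have hunc : Measurable (Function.uncurry
        (fun s y : ℝ => if y ≤ s ∧ s < y + β then (1:ℝ≥0∞) else 0)) := by
      apply Measurable.ite _ measurable_const measurable_const
      exact MeasurableSet.inter (measurableSet_le measurable_snd measurable_fst)
        (measurableSet_lt measurable_fst (measurable_snd.add_const β))
    have h2 : ∀ s : ℝ, μf (Ioc (s - β) s)
        = ∫⁻ y, (if y ≤ s ∧ s < y + β then (1:ℝ≥0∞) else 0) ∂μf := by
      intro s
      have : ∀ y : ℝ, (if y ≤ s ∧ s < y + β then (1:ℝ≥0∞) else 0)
          = (Ioc (s - β) s).indicator (fun _ => (1:ℝ≥0∞)) y := by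
        intro y
        rw [Set.indicator_apply]
        congr 1
        simp only [mem_Ioc, eq_iff_iff]
        constructor
        · rintro ⟨h1', h2'⟩; exact ⟨by linarith, h1'⟩
        · rintro ⟨h1', h2'⟩; exact ⟨h2', by linarith⟩
      simp_rw [this]
      rw [lintegral_indicator measurableSet_Ioc, setLIntegral_one]
    have h3 : ∫⁻ s, μf (Ioc (s - β) s)
        = ∫⁻ y, (∫⁻ s, (if y ≤ s ∧ s < y + β then (1:ℝ≥0∞) else 0)) ∂μf := by
      rw [← lintegral_lintegral_swap hunc.aemeasurable]
      exact lintegral_congr h2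
    have h4 : ∀ y : ℝ, (∫⁻ s, (if y ≤ s ∧ s < y + β then (1:ℝ≥0∞) else 0))
        = ENNReal.ofReal β := by
      intro y
      have : ∀ s : ℝ, (if y ≤ s ∧ s < y + β then (1:ℝ≥0∞) else 0)
          = (Ico y (y + β)).indicator (fun _ => (1:ℝ≥0∞)) s := by
        intro s
        simp [Set.indicator_apply, mem_Ico]
      simp_rw [this]
      rw [lintegral_indicator measurableSet_Ico, setLIntegral_one, Real.volume_Ico]
      congr 1
      ring
    rw [h1, h3]
    simp_rw [h4]
    simp
  have hint : Integrable (fun s => f s - f (s - β)) := by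
    refine ⟨hmeas.aestronglyMeasurable, ?_⟩
    rw [hasFiniteIntegral_iff_ofReal (ae_of_all _ hnn), key]
    exact ENNReal.ofReal_lt_top
  refine ⟨hint, ?_⟩
  rw [integral_eq_lintegral_of_nonneg_ae (ae_of_all _ hnn) hmeas.aestronglyMeasurable, key,
    ENNReal.toReal_ofReal hβ]

lemma kerSup_nonneg : 0 ≤ kerSup ω := ENNReal.toReal_nonneg

lemma shift_bound_aux (hω : IsAveragingKernel ω)
    (hfin : eLpNorm ω ⊤ MeasureTheory.volume ≠ ⊤)
    (hf : MemPsi f) (hfI : Interpolates f 0 1) {β : ℝ} (hβ : 0 ≤ β) (z : ℝ) :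
    conv f ω z - conv f ω (z - β) ∈ Icc 0 (β * kerSup ω) := by
  set K := kerSup ω with hK
  have hωK : ∀ᵐ t : ℝ, ω t ≤ K := by
    filter_upwards [MeasureTheory.ae_le_eLpNormEssSup (f := ω) (μ := volume)] with t ht
    have h1 : ‖ω t‖₊ ≤ (eLpNorm ω ⊤ volume).toNNReal := by
      rw [← ENNReal.coe_le_coe] at *
      rw [ENNReal.coe_toNNReal hfin]
      rw [eLpNorm_exponent_top]
      exact ht
    calc ω t ≤ |ω t| := le_abs_self _
      _ = ‖ω t‖ := rfl
      _ ≤ K := by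
        rw [hK, kerSup, ← ENNReal.coe_toNNReal hfin, ENNReal.coe_toReal]
        exact_mod_cast h1
  have hdiff : conv f ω z - conv f ω (z - β)
      = ∫ t, (f (z - t) * ω t - f (z - β - t) * ω t) := by
    rw [conv_eq f hω, conv_eq f hω,
      ← integral_sub (conv_integrand_int' hω hf.1.measurable hf.2 z)
        (conv_integrand_int' hω hf.1.measurable hf.2 (z - β))]
  have hFF := shift_int hf hfI hβ
  have hcomp : Integrable (fun t => (f (z - t) - f (z - t - β))) := by
    have := hFF.1.comp_sub_left z
    simpa using this
  have hR : Integrable (fun t => (f (z - t) - f (z - β - t)) * K) := by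
    have : (fun t => (f (z - t) - f (z - β - t)) * K)
        = fun t => (f (z - t) - f (z - t - β)) * K := by
      funext t; congr 2; ring_nf
    rw [this]
    exact hcomp.mul_const K
  constructor
  · rw [hdiff]
    refine integral_nonneg fun t => ?_
    have h1 : f (z - β - t) ≤ f (z - t) := hf.1 (by linarith)
    simpa [sub_mul] using mul_nonneg (sub_nonneg.mpr h1) (hω.2.1 t)
  · rw [hdiff]
    have hle : ∫ t, (f (z - t) * ω t - f (z - β - t) * ω t)
        ≤ ∫ t, (f (z - t) - f (z - β - t)) * K := by
      refine integral_mono_ae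
        ((conv_integrand_int' hω hf.1.measurable hf.2 z).sub
          (conv_integrand_int' hω hf.1.measurable hf.2 (z - β))) hR ?_
      filter_upwards [hωK] with t ht
      have h1 : f (z - β - t) ≤ f (z - t) := hf.1 (by linarith)
      have h2 : 0 ≤ ω t := hω.2.1 t
      nlinarith
    refine le_trans hle ?_
    have heq : ∫ t, (f (z - t) - f (z - β - t)) * K
        = (∫ t, (f (z - t) - f (z - t - β))) * K := by
      rw [← integral_mul_const]
      congr 1; funext t; congr 2; ring_nf
    rw [heq]
    have : (∫ t, (f (z - t) - f (z - t - β))) = β := by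
      have := MeasureTheory.integral_sub_left_eq_self
        (fun s => f s - f (s - β)) (volume : Measure ℝ) z
      rw [this, hFF.2]
    rw [this]

end Aux

/-- **Lower bound on the shift.** -/
theorem shift_lower_bound
    (ω hf hg f g : ℝ → ℝ) (α : ℝ)
    (hω : IsAveragingKernel ω)
    (hfin : eLpNorm ω ⊤ MeasureTheory.volume ≠ ⊤)
    (hhf : MemX hf) (hhg : MemX hg)
    (hfΨ : MemPsi f) (hgΨ : MemPsi g)
    (hfI : Interpolates f 0 1) (hgI : Interpolates g 0 1)
    (hwave : ConsistentWave hf hg f g ω α) :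
    |Agap hf hg| ≤ |α| * kerSup ω := by
  classical
  set μf := (hfΨ.1.stieltjesFunction).measure with hμf
  set μg := (hgΨ.1.stieltjesFunction).measure with hμg
  haveI hpf : IsProbabilityMeasure μf :=
    ⟨by rw [hμf, StieltjesFunction.measure_univ _ (stj_tendsto_bot hfΨ hfI)
          (stj_tendsto_top hfΨ hfI)]; simp⟩
  haveI hpg : IsProbabilityMeasure μg :=
    ⟨by rw [hμg, StieltjesFunction.measure_univ _ (stj_tendsto_bot hgΨ hgI)
          (stj_tendsto_top hgΨ hgI)]; simp⟩
  -- the two wave profiles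
  have hu_m : Monotone (conv f ω) := conv_mono hω hfΨ
  have hu_c : Continuous (conv f ω) := conv_cont hω hfΨ
  have hu_I : Interpolates (conv f ω) 0 1 := conv_interp hω hfΨ hfI
  have hu_1 : ∀ x, conv f ω x ∈ Icc (0:ℝ) 1 :=
    fun x => conv_mem hω hfΨ.1.measurable hfΨ.2 x
  have hv_m : Monotone (fun x => conv g ω (x + α)) :=
    fun x y hxy => conv_mono hω hgΨ (by linarith)
  have hv_c : Continuous (fun x => conv g ω (x + α)) :=
    (conv_cont hω hgΨ).comp (continuous_id.add continuous_const)
  have hv_I : Interpolates (fun x => conv g ω (x + α)) 0 1 :=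
    ⟨(conv_interp hω hgΨ hgI).1.comp (tendsto_atBot_add_const_right _ α tendsto_id),
     (conv_interp hω hgΨ hgI).2.comp (tendsto_atTop_add_const_right _ α tendsto_id)⟩
  have hv_1 : ∀ x, conv g ω (x + α) ∈ Icc (0:ℝ) 1 :=
    fun x => conv_mem hω hgΨ.1.measurable hgΨ.2 (x + α)
  -- key ENNReal quantities
  set A' := ∫⁻ x, ENNReal.ofReal (conv f ω x) ∂μg with hA'
  set B' := ∫⁻ y, ENNReal.ofReal (conv g ω y) ∂μf with hB'
  set C' := ∫⁻ y, ENNReal.ofReal (conv f ω (y - α)) ∂μg with hC'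
  set Lg := ∫⁻ w in Ioc (0:ℝ) 1, ENNReal.ofReal (Xinv hg w) with hLg
  set Lf := ∫⁻ w in Ioc (0:ℝ) 1, ENNReal.ofReal (Xinv hf w) with hLf
  set Cg := ∫⁻ t in Ioc (0:ℝ) 1, ENNReal.ofReal (clampX hg t) with hCg
  set Cf := ∫⁻ t in Ioc (0:ℝ) 1, ENNReal.ofReal (clampX hf t) with hCf
  -- identification of Cg with B'
  have hCgB : Cg = B' := by
    rw [hCg, ← P2 hhg hu_m hu_c hu_I hu_1 hwave.2, hB',
      int_against_density hω hfΨ hfI 0 hu_m hu_c hu_I (fun x => by norm_num)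
        g hgΨ.1.measurable hgΨ.2]
    simp
    rfl
  have hCfC : Cf = C' := by
    rw [hCf, ← P2 hhf hv_m hv_c hv_I hv_1 hwave.1, hC',
      int_against_density hω hgΨ hgI α hv_m hv_c hv_I (fun x => rfl)
        f hfΨ.1.measurable hfΨ.2]
  have hP1 : A' + B' = 1 := P1 hω hfΨ hgΨ hfI hgI
  have hYg : Lg + Cg = 1 := young_enn hhg
  have hYf : Lf + Cf = 1 := young_enn hhf
  -- finiteness
  have hA't : A' ≠ ⊤ := by
    refine ne_top_of_le_ne_top (?_ : (1:ℝ≥0∞) ≠ ⊤) ?_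
    · exact ENNReal.one_ne_top
    · rw [← hP1]; exact le_self_add
  have hB't : B' ≠ ⊤ := by
    refine ne_top_of_le_ne_top ENNReal.one_ne_top ?_
    rw [← hP1]; exact le_add_self
  have hC't : C' ≠ ⊤ := by
    rw [← hCfC]
    refine ne_top_of_le_ne_top ENNReal.one_ne_top ?_
    rw [← hYf]; exact le_add_self
  have hLgt : Lg ≠ ⊤ := by
    refine ne_top_of_le_ne_top ENNReal.one_ne_top ?_
    rw [← hYg]; exact le_self_add
  have hLft : Lf ≠ ⊤ := by
    refine ne_top_of_le_ne_top ENNReal.one_ne_top ?_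
    rw [← hYf]; exact le_self_add
  have hCgt : Cg ≠ ⊤ := by rw [hCgB]; exact hB't
  have hCft : Cf ≠ ⊤ := by rw [hCfC]; exact hC't
  -- real versions
  have hrYg : Lg.toReal + Cg.toReal = 1 := by
    rw [← ENNReal.toReal_add hLgt hCgt, hYg]; simp
  have hrYf : Lf.toReal + Cf.toReal = 1 := by
    rw [← ENNReal.toReal_add hLft hCft, hYf]; simp
  have hrP1 : A'.toReal + B'.toReal = 1 := by
    rw [← ENNReal.toReal_add hA't hB't, hP1]; simp
  -- Agap in terms of lintegrals
  have hXg : (∫ x in (0:ℝ)..1, Xinv hg x) = Lg.toReal := by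
    rw [intervalIntegral.integral_of_le zero_le_one, hLg,
      integral_eq_lintegral_of_nonneg_ae (ae_of_all _ fun w => (Xinv_mem w).1)
        (Xinv_mono.measurable.aestronglyMeasurable)]
  have hXf : (∫ x in (0:ℝ)..1, Xinv hf x) = Lf.toReal := by
    rw [intervalIntegral.integral_of_le zero_le_one, hLf,
      integral_eq_lintegral_of_nonneg_ae (ae_of_all _ fun w => (Xinv_mem w).1)
        (Xinv_mono.measurable.aestronglyMeasurable)]
  have hAgap : Agap hf hg = A'.toReal - C'.toReal := by
    rw [Agap, Pot, hXg, hXf]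
    have h1 : Lg.toReal = 1 - B'.toReal := by rw [← hCgB]; linarith
    have h2 : Lf.toReal = 1 - C'.toReal := by rw [← hCfC]; linarith
    rw [h1, h2]
    linarith
  -- express as a single integral
  have hconv_meas : Measurable (conv f ω) := hu_c.measurable
  have haint : A'.toReal = ∫ x, conv f ω x ∂μg := by
    rw [hA', ← integral_eq_lintegral_of_nonneg_ae (ae_of_all _ fun x => (hu_1 x).1)
      hconv_meas.aestronglyMeasurable]
  have hcint : C'.toReal = ∫ y, conv f ω (y - α) ∂μg := by
    rw [hC', ← integral_eq_lintegral_of_nonneg_ae (ae_of_all _ fun x => (hu_1 (x - α)).1)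
      (hconv_meas.comp (measurable_id.sub_const α)).aestronglyMeasurable]
  have hint1 : Integrable (conv f ω) μg := by
    refine Integrable.mono' (integrable_const (1:ℝ)) hconv_meas.aestronglyMeasurable
      (ae_of_all _ fun x => ?_)
    rw [Real.norm_eq_abs, abs_of_nonneg (hu_1 x).1]
    exact (hu_1 x).2
  have hint2 : Integrable (fun y => conv f ω (y - α)) μg := by
    refine Integrable.mono' (integrable_const (1:ℝ))
      (hconv_meas.comp (measurable_id.sub_const α)).aestronglyMeasurable
      (ae_of_all _ fun x => ?_)
    rw [Real.norm_eq_abs, abs_of_nonneg (hu_1 (x - α)).1]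
    exact (hu_1 (x - α)).2
  have hAgap2 : Agap hf hg = ∫ y, (conv f ω y - conv f ω (y - α)) ∂μg := by
    rw [hAgap, haint, hcint, ← integral_sub hint1 hint2]
  -- pointwise bound
  have hpt : ∀ y, ‖conv f ω y - conv f ω (y - α)‖ ≤ |α| * kerSup ω := by
    intro y
    rcases le_or_gt 0 α with hα | hα
    · have := shift_bound_aux hω hfin hfΨ hfI hα y
      rw [Real.norm_eq_abs, abs_of_nonneg this.1, abs_of_nonneg hα]
      exact this.2
    · have h0 : (0:ℝ) ≤ -α := by linarith
      have := shift_bound_aux hω hfin hfΨ hfI h0 (y - α)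
      have heq : y - α - -α = y := by ring
      rw [heq] at this
      rw [Real.norm_eq_abs, abs_sub_comm, abs_of_nonneg this.1, abs_of_neg hα]
      exact this.2
  rw [hAgap2]
  calc |∫ y, (conv f ω y - conv f ω (y - α)) ∂μg|
      = ‖∫ y, (conv f ω y - conv f ω (y - α)) ∂μg‖ := rfl
    _ ≤ (|α| * kerSup ω) * (μg univ).toReal :=
        norm_integral_le_of_norm_le_const (ae_of_all _ hpt)
    _ = |α| * kerSup ω := by simp
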